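/- In the 𝔽_3-vector space D_9 with distinguished basis α_1,...,α_9, define the weight w(δ) of an element δ as the number of basis vectors appearing with nonzero coefficient. Let K ⊆ D_9 be a linear subspace all of whose nonzero elements have weight at least 6 and weight divisible by 3 (i.e., weight 6 or 9). Then dim K ≤ 3. -/

import Mathlib

open Finset

/-- Pointwise key fact over `ZMod 3`. -/
lemma zmod3_key (a b : ZMod 3) :
    ((if a ≠ 0 then 1 else 0) + (if a + b ≠ 0 then 1 else 0) + (if a - b ≠ 0 then 1 else 0) : ℕ)
      = 2 * (if b ≠ 0 then 1 else 0) + 3 * (if b = 0 ∧ a ≠ 0 then 1 else 0) := by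
  revert a b; decide

/-- Sum of Hamming weights of the three translates `v, v+u, v-u`. -/
lemma three_sum (u v : Fin 9 → ZMod 3) :
    hammingNorm v + hammingNorm (v + u) + hammingNorm (v - u)
      = 2 * hammingNorm u + 3 * #{i | u i = 0 ∧ v i ≠ 0} := by
  simp only [hammingNorm, Finset.card_filter, Pi.add_apply, Pi.sub_apply]
  rw [← Finset.sum_add_distrib, ← Finset.sum_add_distrib, Finset.mul_sum, Finset.mul_sum,
    ← Finset.sum_add_distrib]
  exact Finset.sum_congr rfl fun i _ => zmod3_key (v i) (u i)

theorem stmt_10 (K : Submodule (ZMod 3) (Fin 9 → ZMod 3))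
    (h : ∀ v ∈ K, v ≠ 0 → 6 ≤ hammingNorm v ∧ 3 ∣ hammingNorm v) :
    Module.finrank (ZMod 3) K ≤ 3 := by
  classical
  by_cases hu : ∃ u ∈ K, hammingNorm u = 6
  · obtain ⟨u, huK, hu6⟩ := hu
    have hune : u ≠ 0 := by
      intro h0; rw [h0] at hu6; simp [hammingNorm] at hu6
    let S := {i : Fin 9 // u i = 0}
    let ψ : K →ₗ[ZMod 3] (S → ZMod 3) :=
      (LinearMap.funLeft (ZMod 3) (ZMod 3) Subtype.val).comp K.subtype
    have hcard : Fintype.card S = 3 := by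
      have h1 : (#{i | u i = 0} + #{i | ¬ u i = 0}) = 9 :=
        Finset.card_filter_add_card_filter_not _
      have h2 : #{i | ¬ u i = 0} = 6 := hu6
      have : Fintype.card S = #{i | u i = 0} := Fintype.card_subtype _
      omega
    have hk : Module.finrank (ZMod 3) (LinearMap.ker ψ) ≤ 1 := by
      have hle : (LinearMap.ker ψ).map K.subtype ≤ Submodule.span (ZMod 3) {u} := by
        rintro x ⟨⟨v, hvK⟩, hv, rfl⟩
        simp only [Submodule.coe_subtype]
        have hv' : ψ ⟨v, hvK⟩ = 0 := hv
        by_cases hv0 : v = 0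
        · rw [hv0]; exact Submodule.zero_mem _
        have hzero : #{i : Fin 9 | u i = 0 ∧ v i ≠ 0} = 0 := by
          rw [Finset.card_eq_zero]
          ext i
          simp only [Finset.mem_filter, Finset.mem_univ, true_and, Finset.notMem_empty,
            iff_false, not_and, ne_eq, not_not]
          intro hi
          exact congrFun hv' ⟨i, hi⟩
        have h3 := three_sum u v
        rw [hzero, hu6] at h3
        have h6v := (h v hvK hv0).1
        by_cases hvu1 : v + u = 0
        · have : v = -u := by linear_combination (norm := abel_nf) hvu1
          rw [this]
          exact Submodule.neg_mem _ (Submodule.mem_span_singleton_self u)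
        by_cases hvu2 : v - u = 0
        · have : v = u := by linear_combination (norm := abel_nf) hvu2
          rw [this]; exact Submodule.mem_span_singleton_self u
        have h61 := (h (v + u) (K.add_mem hvK huK) hvu1).1
        have h62 := (h (v - u) (K.sub_mem hvK huK) hvu2).1
        omega
      calc Module.finrank (ZMod 3) (LinearMap.ker ψ)
          = Module.finrank (ZMod 3) ((LinearMap.ker ψ).map K.subtype) :=
            (Submodule.finrank_map_subtype_eq K _).symm
        _ ≤ Module.finrank (ZMod 3) (Submodule.span (ZMod 3) ({u} : Set (Fin 9 → ZMod 3))) :=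
            Submodule.finrank_mono hle
        _ = 1 := finrank_span_singleton hune
    have hr : Module.finrank (ZMod 3) (LinearMap.range ψ) ≤ 2 := by
      have hnet : LinearMap.range ψ ≠ ⊤ := by
        intro htop
        have hS : Nonempty S := by
          rw [← Fintype.card_pos_iff, hcard]; norm_num
        obtain ⟨s₀⟩ := hS
        obtain ⟨⟨v, hvK⟩, hv⟩ := LinearMap.range_eq_top.mp htop (Pi.single s₀ 1)
        have hvs : ∀ i (hi : u i = 0), v i = (Pi.single s₀ (1 : ZMod 3) : S → ZMod 3) ⟨i, hi⟩ := by
          intro i hi; exact congrFun hv ⟨i, hi⟩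
        have hone : #{i : Fin 9 | u i = 0 ∧ v i ≠ 0} = 1 := by
          rw [Finset.card_eq_one]
          refine ⟨(s₀ : Fin 9), ?_⟩
          ext i
          simp only [Finset.mem_filter, Finset.mem_univ, true_and, Finset.mem_singleton]
          constructor
          · rintro ⟨hi, hvi⟩
            rw [hvs i hi] at hvi
            by_contra hne
            exact hvi (Pi.single_eq_of_ne (fun hc => hne (congrArg Subtype.val hc)) 1)
          · rintro rfl
            refine ⟨s₀.2, ?_⟩
            rw [hvs _ s₀.2]
            have : (⟨(s₀ : Fin 9), s₀.2⟩ : S) = s₀ := Subtype.ext rfl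
            rw [this, Pi.single_eq_same]
            exact one_ne_zero
        have hvs0 : v (s₀ : Fin 9) = 1 := by
          rw [hvs _ s₀.2]
          have : (⟨(s₀ : Fin 9), s₀.2⟩ : S) = s₀ := Subtype.ext rfl
          rw [this, Pi.single_eq_same]
        have hus0 : u (s₀ : Fin 9) = 0 := s₀.2
        have hv0 : v ≠ 0 := by
          intro h0; rw [h0] at hvs0; simp at hvs0
        have hvu1 : v + u ≠ 0 := by
          intro h0
          have := congrFun h0 (s₀ : Fin 9)
          simp [hvs0, hus0] at this
        have hvu2 : v - u ≠ 0 := by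
          intro h0
          have := congrFun h0 (s₀ : Fin 9)
          simp [hvs0, hus0] at this
        have h3 := three_sum u v
        rw [hone, hu6] at h3
        have h6v := (h v hvK hv0).1
        have h61 := (h (v + u) (K.add_mem hvK huK) hvu1).1
        have h62 := (h (v - u) (K.sub_mem hvK huK) hvu2).1
        omega
      have hlt : Module.finrank (ZMod 3) (LinearMap.range ψ)
          < Module.finrank (ZMod 3) (S → ZMod 3) :=
        Submodule.finrank_lt hnet
      rw [Module.finrank_fintype_fun_eq_card, hcard] at hlt
      omega
    have hrk := LinearMap.finrank_range_add_finrank_ker ψ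
    omega
  · -- no weight-6 vector: every nonzero vector has weight 9, so evaluation at 0 is injective
    push_neg at hu
    have hinj : Function.Injective ((LinearMap.proj (0 : Fin 9)).comp K.subtype) := by
      rw [← LinearMap.ker_eq_bot]
      rw [LinearMap.ker_eq_bot']
      rintro ⟨v, hvK⟩ hv0
      have hv00 : v 0 = 0 := hv0
      refine Subtype.ext (funext fun i => ?_)
      show v i = 0
      by_contra hvi
      have hvne : v ≠ 0 := by
        intro h0; rw [h0] at hvi; exact hvi rfl
      obtain ⟨h6, hd⟩ := h v hvK hvne
      have hle9 : hammingNorm v ≤ 9 := by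
        simpa [hammingNorm] using Finset.card_filter_le Finset.univ (fun i => v i ≠ 0)
      have h9 : hammingNorm v = 9 := by
        have := hu v hvK
        omega
      have hsub : ({i : Fin 9 | v i ≠ 0} : Finset (Fin 9)) ⊆ Finset.univ.erase 0 := by
        intro j hj
        simp only [Finset.mem_filter] at hj
        refine Finset.mem_erase.mpr ⟨?_, Finset.mem_univ _⟩
        intro hj0; rw [hj0] at hj; exact hj.2 hv00
      have := Finset.card_le_card hsub
      rw [Finset.card_erase_of_mem (Finset.mem_univ _), Finset.card_univ] at this
      simp only [Fintype.card_fin] at this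
      exact absurd h9 (by unfold hammingNorm; omega)
    have := LinearMap.finrank_le_finrank_of_injective hinj
    rw [Module.finrank_self] at this
    omega
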